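/- arXiv:2406.00193 — 2 statements merged into one kernel-verified Lean document; each statement's English description precedes it below -/
import Mathlib

section
/- Let P be an n-qubit Pauli string (a tensor product of single-site I, X, Y, Z). Under the uniform random-XZ measurement ensemble, the measurement channel M_XZ satisfies M_XZ(P) = (1/2^{k(P)})·P if P contains no Y factor, where k(P) is the number of non-identity sites of P, and M_XZ(P) = 0 if P contains at least one Y factor. -/
open Matrix

noncomputable section

/-- Pauli X matrix. -/
def Xm : Matrix (Fin 2) (Fin 2) ℂ := !![0, 1; 1, 0]
/-- Pauli Y matrix. -/
def Ym : Matrix (Fin 2) (Fin 2) ℂ := !![0, -Complex.I; Complex.I, 0]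
/-- Pauli Z matrix. -/
def Zm : Matrix (Fin 2) (Fin 2) ℂ := !![1, 0; 0, -1]
/-- Hadamard matrix. -/
def Hm : Matrix (Fin 2) (Fin 2) ℂ := ((Real.sqrt 2 : ℂ))⁻¹ • !![1, 1; 1, -1]

/-- The space of `n`-qubit operators. -/
abbrev QOp (n : ℕ) := Matrix (Fin n → Fin 2) (Fin n → Fin 2) ℂ

/-- Tensor (Kronecker) product of a family of single-qubit matrices. -/
def prodMat (n : ℕ) (f : Fin n → Matrix (Fin 2) (Fin 2) ℂ) : QOp n :=
  fun b b' => ∏ i, f i (b i) (b' i)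

/-- The single-qubit Paulis indexed by `Fin 4`: `0 ↦ I`, `1 ↦ X`, `2 ↦ Y`, `3 ↦ Z`. -/
def pauli : Fin 4 → Matrix (Fin 2) (Fin 2) ℂ := ![1, Xm, Ym, Zm]

/-- An `n`-qubit Pauli string. -/
def PStr (n : ℕ) (p : Fin n → Fin 4) : QOp n := prodMat n (fun i => pauli (p i))

/-- The product measurement unitary `U = ⊗_i U^{α_i}` with `U^X = H`, `U^Z = I`;
`α i = true` means measuring site `i` in the `X` basis. -/
def Umeas (n : ℕ) (α : Fin n → Bool) : QOp n := prodMat n (fun i => if α i then Hm else 1)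

/-- The random-XZ measurement channel
`M_XZ(A) = E_{U∼U_XZ} Σ_b ⟨b|UAU†|b⟩ · U†|b⟩⟨b|U`. -/
def MXZ (n : ℕ) (A : QOp n) : QOp n :=
  ((2 : ℂ) ^ n)⁻¹ • ∑ α : Fin n → Bool, ∑ b : Fin n → Fin 2,
    ((Umeas n α * A * (Umeas n α)ᴴ) b b) •
      ((Umeas n α)ᴴ * Matrix.single b b 1 * Umeas n α)

/-- Single-site measurement sum. -/
def S1 (U M : Matrix (Fin 2) (Fin 2) ℂ) : Matrix (Fin 2) (Fin 2) ℂ :=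
  ∑ b : Fin 2, ((U * M * Uᴴ) b b) • (Uᴴ * Matrix.single b b 1 * U)

/-- Single-site average over the two bases (times 2). -/
def T (q : Fin 4) : Matrix (Fin 2) (Fin 2) ℂ :=
  ∑ α : Bool, S1 (if α then Hm else 1) (pauli q)

lemma hsqrt : ((Real.sqrt 2 : ℝ) : ℂ) * ((Real.sqrt 2 : ℝ) : ℂ) = 2 := by
  rw [← Complex.ofReal_mul, Real.mul_self_sqrt (by norm_num)]; norm_num

lemma T0 : T 0 = (2 : ℂ) • 1 := by
  have h := hsqrt
  ext i j
  fin_cases i <;> fin_cases j <;>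
    simp [T, S1, Matrix.sum_apply, Matrix.mul_apply, Fin.sum_univ_two, Fintype.sum_bool,
      Hm, pauli, Xm, Ym, Zm, Matrix.conjTranspose_apply, Matrix.one_apply,
      Matrix.single, Matrix.of_apply, Complex.ext_iff] <;> field_simp <;> norm_num <;> norm_num [show Real.sqrt 2 ^ 4 = 4 by rw [show (4:ℕ) = 2 * 2 from rfl, pow_mul, Real.sq_sqrt (by norm_num)]; norm_num]

lemma T1 : T 1 = Xm := by
  have h := hsqrt
  ext i j
  fin_cases i <;> fin_cases j <;>
    simp [T, S1, Matrix.sum_apply, Matrix.mul_apply, Fin.sum_univ_two, Fintype.sum_bool,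
      Hm, pauli, Xm, Ym, Zm, Matrix.conjTranspose_apply, Matrix.one_apply,
      Matrix.single, Matrix.of_apply, Complex.ext_iff] <;> field_simp <;> norm_num <;> norm_num [show Real.sqrt 2 ^ 4 = 4 by rw [show (4:ℕ) = 2 * 2 from rfl, pow_mul, Real.sq_sqrt (by norm_num)]; norm_num]

lemma T2 : T 2 = 0 := by
  have h := hsqrt
  ext i j
  fin_cases i <;> fin_cases j <;>
    simp [T, S1, Matrix.sum_apply, Matrix.mul_apply, Fin.sum_univ_two, Fintype.sum_bool,
      Hm, pauli, Xm, Ym, Zm, Matrix.conjTranspose_apply, Matrix.one_apply,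
      Matrix.single, Matrix.of_apply, Complex.ext_iff] <;> field_simp <;> norm_num

lemma T3 : T 3 = Zm := by
  have h := hsqrt
  ext i j
  fin_cases i <;> fin_cases j <;>
    simp [T, S1, Matrix.sum_apply, Matrix.mul_apply, Fin.sum_univ_two, Fintype.sum_bool,
      Hm, pauli, Xm, Ym, Zm, Matrix.conjTranspose_apply, Matrix.one_apply,
      Matrix.single, Matrix.of_apply, Complex.ext_iff] <;> field_simp <;> norm_num

lemma prodMat_mul (n : ℕ) (f g : Fin n → Matrix (Fin 2) (Fin 2) ℂ) :
    prodMat n f * prodMat n g = prodMat n (fun i => f i * g i) := by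
  ext x y
  simp only [Matrix.mul_apply, prodMat]
  rw [Fintype.prod_sum (fun i j => f i (x i) j * g i j (y i))]
  exact Finset.sum_congr rfl fun j _ => (Finset.prod_mul_distrib).symm

lemma prodMat_conjT (n : ℕ) (f : Fin n → Matrix (Fin 2) (Fin 2) ℂ) :
    (prodMat n f)ᴴ = prodMat n (fun i => (f i)ᴴ) := by
  ext x y
  simp [prodMat, Matrix.conjTranspose_apply, star_prod]

lemma std_prod (n : ℕ) (b : Fin n → Fin 2) :
    Matrix.single b b (1 : ℂ)
      = prodMat n (fun i => Matrix.single (b i) (b i) 1) := by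
  ext x y
  simp only [prodMat, Matrix.single, Matrix.of_apply, Finset.prod_boole]
  by_cases hx : b = x ∧ b = y
  · rw [if_pos hx, if_pos fun i _ => ⟨congrFun hx.1 i, congrFun hx.2 i⟩]
  · rw [if_neg hx, if_neg fun hall =>
      hx ⟨funext fun i => (hall i (Finset.mem_univ i)).1,
          funext fun i => (hall i (Finset.mem_univ i)).2⟩]

set_option maxHeartbeats 1000000 in
lemma MXZ_PStr (n : ℕ) (p : Fin n → Fin 4) (x y : Fin n → Fin 2) :
    MXZ n (PStr n p) x y = ((2 : ℂ) ^ n)⁻¹ * ∏ i, T (p i) (x i) (y i) := by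
  have hU : ∀ α : Fin n → Bool,
      Umeas n α * PStr n p * (Umeas n α)ᴴ
        = prodMat n (fun i => (if α i then Hm else 1) * pauli (p i)
            * (if α i then Hm else 1)ᴴ) := by
    intro α
    rw [Umeas, PStr, prodMat_mul, prodMat_conjT, prodMat_mul]
  have hE : ∀ (α : Fin n → Bool) (b : Fin n → Fin 2),
      (Umeas n α)ᴴ * Matrix.single b b (1:ℂ) * Umeas n α
        = prodMat n (fun i => (if α i then Hm else 1)ᴴ
            * Matrix.single (b i) (b i) 1 * (if α i then Hm else 1)) := by
    intro α b
    rw [Umeas, prodMat_conjT, std_prod, prodMat_mul, prodMat_mul]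
  set F : Fin n → Bool → Fin 2 → ℂ := fun i a β =>
    ((if a then Hm else 1) * pauli (p i) * (if a then Hm else 1)ᴴ) β β
      * ((if a then Hm else 1)ᴴ * Matrix.single β β (1:ℂ) * (if a then Hm else 1))
          (x i) (y i) with hF
  have key : MXZ n (PStr n p) x y
      = ((2 : ℂ) ^ n)⁻¹ * ∑ α : Fin n → Bool, ∑ b : Fin n → Fin 2, ∏ i, F i (α i) (b i) := by
    rw [MXZ]
    simp only [hU, hE, Matrix.smul_apply, Matrix.sum_apply, smul_eq_mul, prodMat, hF]
    congr 1
    refine Finset.sum_congr rfl fun α _ => Finset.sum_congr rfl fun b _ => ?_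
    exact (Finset.prod_mul_distrib).symm
  rw [key]
  congr 1
  have e1 : ∀ α : Fin n → Bool,
      (∑ b : Fin n → Fin 2, ∏ i, F i (α i) (b i)) = ∏ i, ∑ β : Fin 2, F i (α i) β :=
    fun α => (Fintype.prod_sum fun i β => F i (α i) β).symm
  simp only [e1]
  rw [← Fintype.prod_sum fun i a => ∑ β : Fin 2, F i a β]
  refine Finset.prod_congr rfl fun i _ => ?_
  simp [T, S1, Matrix.sum_apply, Matrix.smul_apply, smul_eq_mul, hF,
    Matrix.single, Matrix.of_apply, mul_ite, mul_zero, mul_one]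

lemma T_of_ne (q : Fin 4) (hq : q ≠ 2) :
    T q = (if q = 0 then (2 : ℂ) else 1) • pauli q := by
  fin_cases q
  · simpa [pauli] using T0
  · simpa [pauli] using T1
  · exact absurd rfl hq
  · simpa [pauli] using T3

/-- Eigenvalues of the random-XZ measurement channel on Pauli strings: a `Y`-free Pauli
string of weight `k` has eigenvalue `2^{-k}`, and any string containing a `Y` is
annihilated. -/
theorem stmt3 (n : ℕ) (p : Fin n → Fin 4) :
    ((∀ i, p i ≠ 2) →
      MXZ n (PStr n p)
        = ((2 : ℂ) ^ (Finset.univ.filter fun i => p i ≠ 0).card)⁻¹ • PStr n p) ∧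
    ((∃ i, p i = 2) → MXZ n (PStr n p) = 0) := by
  constructor
  · intro hp
    ext x y
    rw [MXZ_PStr]
    have h1 : ∀ i, T (p i) (x i) (y i)
        = (if p i = 0 then (2 : ℂ) else 1) * pauli (p i) (x i) (y i) := by
      intro i
      rw [T_of_ne (p i) (hp i)]
      simp
    simp only [h1]
    rw [Finset.prod_mul_distrib]
    have h2 : (∏ i : Fin n, (if p i = 0 then (2 : ℂ) else 1))
        = 2 ^ (Finset.univ.filter fun i => p i = 0).card := by
      rw [Finset.prod_ite, Finset.prod_const, Finset.prod_const]
      simp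
    have hcard : (Finset.univ.filter fun i => p i ≠ 0).card
        + (Finset.univ.filter fun i => p i = 0).card = n := by
      have := Finset.card_filter_add_card_filter_not
        (s := (Finset.univ : Finset (Fin n))) (p := fun i => p i ≠ 0)
      simpa [not_not, Finset.card_univ] using this
    have hsc : ((2 : ℂ) ^ n)⁻¹ * 2 ^ (Finset.univ.filter fun i => p i = 0).card
        = ((2 : ℂ) ^ (Finset.univ.filter fun i => p i ≠ 0).card)⁻¹ := by
      have h20 : (2 : ℂ) ≠ 0 := by norm_num
      have hn : (2 : ℂ) ^ n = 2 ^ (Finset.univ.filter fun i => p i ≠ 0).card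
          * 2 ^ (Finset.univ.filter fun i => p i = 0).card := by
        rw [← pow_add, hcard]
      rw [hn]
      field_simp
    rw [h2, Matrix.smul_apply, smul_eq_mul, ← mul_assoc, hsc]
    rfl
  · rintro ⟨i, hi⟩
    ext x y
    rw [MXZ_PStr]
    have : T (p i) (x i) (y i) = 0 := by rw [hi, T2]; simp
    rw [Finset.prod_eq_zero (Finset.mem_univ i) this]
    simp
end
end

section
/- The random-XZ measurement channel M_XZ factorizes as the n-fold tensor power of the single-qubit channel M^{(1)}(B) = (1/4)(Tr(BX)·X + Tr(BZ)·Z) + (1/2)Tr(B)·I; i.e., M_XZ = (M^{(1)})^{⊗n} as linear maps on n-qubit operators. -/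
open Matrix

noncomputable section

/-- The single-qubit measurement channel `M⁽¹⁾`. -/
def M1 (B : Matrix (Fin 2) (Fin 2) ℂ) : Matrix (Fin 2) (Fin 2) ℂ :=
  (1 / 4 : ℂ) • ((B * Xm).trace • Xm + (B * Zm).trace • Zm)
    + (1 / 2 : ℂ) • B.trace • (1 : Matrix (Fin 2) (Fin 2) ℂ)

/- ### Auxiliary lemmas -/

/-- The single-site summand in the factorized form of `M_XZ`. -/
def Tq (B : Matrix (Fin 2) (Fin 2) ℂ) (a : Bool) (x c c' : Fin 2) : ℂ :=
  (((if a then Hm else 1) * B * (if a then Hm else 1)ᴴ) x x) *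
    (((if a then Hm else 1)ᴴ * Matrix.single x x (1:ℂ) * (if a then Hm else 1)) c c')

set_option maxHeartbeats 1000000 in
/-- The single-qubit case of the factorization. -/
lemma key (B : Matrix (Fin 2) (Fin 2) ℂ) (c c' : Fin 2) :
    (2:ℂ)⁻¹ * ∑ a : Bool, ∑ x : Fin 2, Tq B a x c c' = M1 B c c' := by
  have h2 : ((Real.sqrt 2 : ℝ) : ℂ) ^ 2 = 2 := by
    rw [← Complex.ofReal_pow, Real.sq_sqrt (by norm_num)]; norm_num
  have h4 : ((Real.sqrt 2 : ℝ) : ℂ) ^ 4 = 4 := by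
    rw [show (4:ℕ) = 2*2 from rfl, pow_mul, h2]; norm_num
  have hi2 : (((Real.sqrt 2 : ℝ) : ℂ))⁻¹ ^ 2 = 2⁻¹ := by rw [inv_pow, h2]
  have hi4 : (((Real.sqrt 2 : ℝ) : ℂ))⁻¹ ^ 4 = 4⁻¹ := by rw [inv_pow, h4]
  have hstar : star (((Real.sqrt 2 : ℝ) : ℂ))⁻¹ = (((Real.sqrt 2 : ℝ) : ℂ))⁻¹ := by
    simp [Complex.conj_ofReal]
  fin_cases c <;> fin_cases c' <;>
    · simp [Tq, Fintype.sum_bool, Fin.sum_univ_two, Hm, Xm, Zm, M1, mul_apply, trace,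
        Matrix.one_apply, Matrix.single, conjTranspose_apply, hstar, Matrix.diag,
        vecMul, dotProduct, vecHead, vecTail]
      field_simp
      ring_nf
      simp only [h2, h4, hi2, hi4]
      ring

lemma stdBasis_prodMat (n : ℕ) (b : Fin n → Fin 2) :
    Matrix.single b b (1:ℂ) = prodMat n (fun i => Matrix.single (b i) (b i) 1) := by
  ext c c'
  simp only [prodMat, Matrix.single, of_apply, Finset.prod_boole, Finset.mem_univ,
    forall_const, true_implies]
  simp [funext_iff, forall_and]

/-- The random-XZ channel factorizes as the `n`-fold tensor power of the single-qubit
channel `M⁽¹⁾`: it acts factor-wise on every tensor-product operator (and both sides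
are linear, so this determines `M_XZ = (M⁽¹⁾)^{⊗n}`). -/
theorem stmt4 (n : ℕ) (f : Fin n → Matrix (Fin 2) (Fin 2) ℂ) :
    MXZ n (prodMat n f) = prodMat n (fun i => M1 (f i)) := by
  ext c c'
  have hsummand : ∀ (α : Fin n → Bool) (b : Fin n → Fin 2),
      ((Umeas n α * prodMat n f * (Umeas n α)ᴴ) b b) *
        (((Umeas n α)ᴴ * Matrix.single b b (1:ℂ) * Umeas n α) c c')
      = ∏ i, Tq (f i) (α i) (b i) (c i) (c' i) := by
    intro α b
    rw [Umeas, prodMat_conjT, prodMat_mul, prodMat_mul, stdBasis_prodMat,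
      prodMat_mul, prodMat_mul]
    simp only [prodMat, Tq, ← Finset.prod_mul_distrib]
  have h1 : ∀ α : Fin n → Bool,
      ∑ b : Fin n → Fin 2, ∏ i, Tq (f i) (α i) (b i) (c i) (c' i)
      = ∏ i, ∑ x : Fin 2, Tq (f i) (α i) x (c i) (c' i) := by
    intro α; rw [Finset.prod_univ_sum, Fintype.piFinset_univ]
  have h2 : ∑ α : Fin n → Bool, ∏ i, ∑ x : Fin 2, Tq (f i) (α i) x (c i) (c' i)
      = ∏ i, ∑ a : Bool, ∑ x : Fin 2, Tq (f i) a x (c i) (c' i) := by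
    rw [Finset.prod_univ_sum, Fintype.piFinset_univ]
  simp only [MXZ, Matrix.smul_apply, Matrix.sum_apply, smul_eq_mul]
  calc ((2:ℂ) ^ n)⁻¹ * ∑ α : Fin n → Bool, ∑ b : Fin n → Fin 2,
        ((Umeas n α * prodMat n f * (Umeas n α)ᴴ) b b) *
          (((Umeas n α)ᴴ * Matrix.single b b (1:ℂ) * Umeas n α) c c')
      = ((2:ℂ) ^ n)⁻¹ * ∏ i, ∑ a : Bool, ∑ x : Fin 2, Tq (f i) a x (c i) (c' i) := by
        rw [← h2]
        congr 1
        refine Finset.sum_congr rfl fun α _ => ?_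
        rw [← h1]
        exact Finset.sum_congr rfl fun b _ => hsummand α b
    _ = ∏ i, (2:ℂ)⁻¹ * ∑ a : Bool, ∑ x : Fin 2, Tq (f i) a x (c i) (c' i) := by
        rw [Finset.prod_mul_distrib, Finset.prod_const, Finset.card_univ, Fintype.card_fin,
          inv_pow]
    _ = ∏ i, M1 (f i) (c i) (c' i) := Finset.prod_congr rfl fun i _ => key (f i) (c i) (c' i)
    _ = prodMat n (fun i => M1 (f i)) c c' := rfl
end
end
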